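/- arXiv:2207.00310 — 2 statements merged into one kernel-verified Lean document; each statement's English description precedes it below -/
import Mathlib

section
/- Let ρ: ℝ^d → ℝ be a norm and A_1,…,A_p ⊆ {1,…,d} be subsets whose union is {1,…,d}, and let τ_1,…,τ_p > 0. Define ‖β‖_τ = inf{ ∑_{j=1}^p τ_j ρ(γ_j) : ∑_j γ_j = β, supp(γ_j) ⊆ A_j }. Then ‖·‖_τ is a norm on ℝ^d. -/
/-- The latent group lasso penalty `‖β‖_τ` is a norm on `ℝ^d`. -/
theorem stmt5 (d p : ℕ) (rho : (Fin d → ℝ) → ℝ)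
    (hrho_add : ∀ x y, rho (x + y) ≤ rho x + rho y)
    (hrho_smul : ∀ (a : ℝ) x, rho (a • x) = |a| * rho x)
    (hrho_zero : ∀ x, rho x = 0 ↔ x = 0)
    (A : Fin p → Finset (Fin d)) (hcover : ∀ i, ∃ j, i ∈ A j)
    (tau : Fin p → ℝ) (htau : ∀ j, 0 < tau j)
    (N : (Fin d → ℝ) → ℝ)
    (hN : ∀ β, N β = sInf {s : ℝ | ∃ γ : Fin p → (Fin d → ℝ),
      (∑ j, γ j) = β ∧ (∀ j i, i ∉ A j → γ j i = 0) ∧ s = ∑ j, tau j * rho (γ j)}) :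
    (∀ β, 0 ≤ N β) ∧
    (∀ β, N β = 0 ↔ β = 0) ∧
    (∀ (a : ℝ) β, N (a • β) = |a| * N β) ∧
    (∀ β β', N (β + β') ≤ N β + N β') := by
  classical
  have hrho0 : rho 0 = 0 := (hrho_zero 0).mpr rfl
  have hneg : ∀ x, rho (-x) = rho x := by
    intro x
    have := hrho_smul (-1) x
    simpa using this
  have hnonneg : ∀ x, 0 ≤ rho x := by
    intro x
    have h1 := hrho_add x (-x)
    rw [add_neg_cancel, hrho0, hneg] at h1
    linarith
  let S : (Fin d → ℝ) → Set ℝ := fun β => {s : ℝ | ∃ γ : Fin p → (Fin d → ℝ),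
      (∑ j, γ j) = β ∧ (∀ j i, i ∉ A j → γ j i = 0) ∧ s = ∑ j, tau j * rho (γ j)}
  have hNS : ∀ β, N β = sInf (S β) := hN
  have hlb : ∀ β s, s ∈ S β → 0 ≤ s := by
    rintro β s ⟨γ, -, -, rfl⟩
    exact Finset.sum_nonneg fun j _ => mul_nonneg (htau j).le (hnonneg _)
  have hbdd : ∀ β, BddBelow (S β) := fun β => ⟨0, fun s hs => hlb β s hs⟩
  choose f hf using hcover
  have hne : ∀ β, (S β).Nonempty := by
    intro β
    refine ⟨∑ j, tau j * rho (fun i => if f i = j then β i else 0),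
      fun j i => if f i = j then β i else 0, ?_, ?_, rfl⟩
    · funext i
      simp [Finset.sum_apply]
    · intro j i hij
      show (if f i = j then β i else 0) = 0
      split_ifs with h
      · exact absurd (h ▸ hf i) hij
      · rfl
  have hN0 : N 0 = 0 := by
    rw [hNS]
    refine le_antisymm ?_ (le_csInf (hne 0) (hlb 0))
    have hmem : (0 : ℝ) ∈ S 0 := ⟨fun _ => 0, by simp, by simp, by simp [hrho0]⟩
    exact csInf_le (hbdd 0) hmem
  have hsum : ∀ (s : Finset (Fin p)) (γ : Fin p → Fin d → ℝ),
      rho (∑ j ∈ s, γ j) ≤ ∑ j ∈ s, rho (γ j) := by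
    intro s γ
    induction s using Finset.induction_on with
    | empty => simp [hrho0]
    | insert _ _ h ih =>
      rw [Finset.sum_insert h, Finset.sum_insert h]
      exact le_trans (hrho_add _ _) (by linarith)
  have hkey : ∀ (a : ℝ), a ≠ 0 → ∀ β, sInf (S (a • β)) ≤ |a| * sInf (S β) := by
    intro a ha β
    have ha' : 0 < |a| := abs_pos.mpr ha
    have hstep : ∀ s ∈ S β, sInf (S (a • β)) ≤ |a| * s := by
      rintro s ⟨γ, hsum', hsupp, rfl⟩
      refine csInf_le (hbdd _) ⟨fun j => a • γ j, ?_, ?_, ?_⟩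
      · rw [← Finset.smul_sum, hsum']
      · intro j i hij
        show a • γ j i = 0
        rw [hsupp j i hij, smul_zero]
      · rw [Finset.mul_sum]
        refine Finset.sum_congr rfl fun j _ => ?_
        rw [hrho_smul]
        ring
    have hdiv : sInf (S (a • β)) / |a| ≤ sInf (S β) :=
      le_csInf (hne β) fun s hs => (div_le_iff₀ ha').mpr (by rw [mul_comm]; exact hstep s hs)
    calc sInf (S (a • β)) = sInf (S (a • β)) / |a| * |a| := by field_simp
      _ ≤ sInf (S β) * |a| := mul_le_mul_of_nonneg_right hdiv ha'.le
      _ = |a| * sInf (S β) := mul_comm _ _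
  have hhom : ∀ (a : ℝ) β, N (a • β) = |a| * N β := by
    intro a β
    by_cases ha : a = 0
    · subst ha
      simp [hN0]
    · refine le_antisymm (by rw [hNS, hNS]; exact hkey a ha β) ?_
      have h2 := hkey a⁻¹ (inv_ne_zero ha) (a • β)
      rw [inv_smul_smul₀ ha, abs_inv] at h2
      rw [hNS, hNS]
      have ha' : 0 < |a| := abs_pos.mpr ha
      calc |a| * sInf (S β) ≤ |a| * (|a|⁻¹ * sInf (S (a • β))) :=
            mul_le_mul_of_nonneg_left h2 ha'.le
        _ = sInf (S (a • β)) := by field_simp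
  have hzero : ∀ β, N β = 0 ↔ β = 0 := by
    intro β
    constructor
    · intro h
      by_cases hp : p = 0
      · subst hp
        funext i
        exact (f i).elim0
      · have hpe : Nonempty (Fin p) := ⟨⟨0, Nat.pos_of_ne_zero hp⟩⟩
        have hune : (Finset.univ : Finset (Fin p)).Nonempty := Finset.univ_nonempty
        set c := Finset.univ.inf' hune tau with hc
        have hcpos : 0 < c := (Finset.lt_inf'_iff _).mpr fun j _ => htau j
        have hlb2 : ∀ s ∈ S β, c * rho β ≤ s := by
          rintro s ⟨γ, hsum', hsupp, rfl⟩
          calc c * rho β = c * rho (∑ j, γ j) := by rw [hsum']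
            _ ≤ c * ∑ j, rho (γ j) := mul_le_mul_of_nonneg_left (hsum _ γ) hcpos.le
            _ = ∑ j, c * rho (γ j) := Finset.mul_sum _ _ _
            _ ≤ ∑ j, tau j * rho (γ j) := Finset.sum_le_sum fun j _ =>
                mul_le_mul_of_nonneg_right (Finset.inf'_le _ (Finset.mem_univ j)) (hnonneg _)
        have hle : c * rho β ≤ sInf (S β) := le_csInf (hne β) hlb2
        rw [← hNS, h] at hle
        have hr : rho β = 0 :=
          le_antisymm (nonpos_of_mul_nonpos_right (by linarith) hcpos |>.trans_eq rfl)
            (hnonneg β)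
        exact (hrho_zero β).mp hr
    · rintro rfl
      exact hN0
  have htri : ∀ β β', N (β + β') ≤ N β + N β' := by
    intro β β'
    rw [hNS, hNS, hNS]
    have hstep : ∀ s ∈ S β, ∀ t ∈ S β', sInf (S (β + β')) ≤ s + t := by
      rintro s ⟨γ, h1, h2, rfl⟩ t ⟨δ, h1', h2', rfl⟩
      have hmem : (∑ j, tau j * rho (γ j + δ j)) ∈ S (β + β') := by
        refine ⟨fun j => γ j + δ j, ?_, ?_, rfl⟩
        · rw [Finset.sum_add_distrib, h1, h1']
        · intro j i hij
          show γ j i + δ j i = 0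
          rw [h2 j i hij, h2' j i hij, add_zero]
      refine le_trans (csInf_le (hbdd _) hmem) ?_
      rw [← Finset.sum_add_distrib]
      refine Finset.sum_le_sum fun j _ => ?_
      rw [← mul_add]
      exact mul_le_mul_of_nonneg_left (hrho_add _ _) (htau j).le
    have h1 : ∀ t ∈ S β', sInf (S (β + β')) - t ≤ sInf (S β) := by
      intro t ht
      refine le_csInf (hne β) fun s hs => ?_
      linarith [hstep s hs t ht]
    have h2 : sInf (S (β + β')) - sInf (S β) ≤ sInf (S β') := by
      refine le_csInf (hne β') fun t ht => ?_
      linarith [h1 t ht]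
    linarith
  refine ⟨fun β => ?_, hzero, hhom, htri⟩
  rw [hNS]
  exact le_csInf (hne β) fun s hs => hlb β s hs
end

section
/- Let f(Δ) = (1/(2t))‖Δ − Δ_0‖_F² + λτη·log(1 + ‖Δ‖_F/η) for matrices Δ, with λtτ < η. Then any minimizer Δ* is a nonnegative scalar multiple of Δ_0, i.e., Δ* = c·Δ_0 for some c ∈ [0,1]. -/
open scoped RealInnerProductSpace

/-- Any minimizer of the matrix log-sum proximal objective is a nonnegative scalar multiple
`c·Δ₀` with `c ∈ [0,1]`. -/
theorem stmt12 (p M : ℕ) (t lam tau eta : ℝ) (ht : 0 < t) (hlam : 0 < lam) (htau : 0 < tau)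
    (heta : 0 < eta) (hlt : lam * t * tau < eta)
    (Δ0 : Matrix (Fin p) (Fin M) ℝ)
    (f : Matrix (Fin p) (Fin M) ℝ → ℝ)
    (hf : ∀ Δ, f Δ = (1 / (2 * t)) * (Real.sqrt (∑ i, ∑ m, (Δ i m - Δ0 i m) ^ 2)) ^ 2 +
      lam * tau * eta * Real.log (1 + Real.sqrt (∑ i, ∑ m, (Δ i m) ^ 2) / eta))
    (Δstar : Matrix (Fin p) (Fin M) ℝ)
    (hmin : ∀ Δ, f Δstar ≤ f Δ) :
    ∃ c ∈ Set.Icc (0 : ℝ) 1, Δstar = c • Δ0 := by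
  classical
  let φ : Matrix (Fin p) (Fin M) ℝ → EuclideanSpace ℝ (Fin p × Fin M) :=
    fun Δ => WithLp.toLp 2 (fun q : Fin p × Fin M => Δ q.1 q.2)
  have hφnorm : ∀ Δ : Matrix (Fin p) (Fin M) ℝ,
      Real.sqrt (∑ i, ∑ m, (Δ i m) ^ 2) = ‖φ Δ‖ := by
    intro Δ
    rw [EuclideanSpace.norm_eq]
    congr 1
    rw [Fintype.sum_prod_type]
    simp [φ, Real.norm_eq_abs, sq_abs]
  have hC : 0 < lam * tau * eta := by positivity
  have hfn : ∀ Δ, f Δ = (1 / (2 * t)) * ‖φ Δ - φ Δ0‖ ^ 2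
      + lam * tau * eta * Real.log (1 + ‖φ Δ‖ / eta) := by
    intro Δ
    have h1 : Real.sqrt (∑ i, ∑ m, (Δ i m - Δ0 i m) ^ 2) = ‖φ Δ - φ Δ0‖ := by
      have h2 : φ (Δ - Δ0) = φ Δ - φ Δ0 := rfl
      have := hφnorm (Δ - Δ0)
      simpa [Matrix.sub_apply, h2] using this
    rw [hf, h1, hφnorm]
  by_cases hΔ0 : Δ0 = 0
  · refine ⟨0, ⟨le_refl 0, zero_le_one⟩, ?_⟩
    subst hΔ0
    have h0 : f 0 = 0 := by
      rw [hf]; simp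
    have hle : f Δstar ≤ 0 := h0 ▸ hmin 0
    have hφ0 : φ (0 : Matrix (Fin p) (Fin M) ℝ) = 0 := rfl
    have hge1 : 0 ≤ (1 / (2 * t)) * ‖φ Δstar - φ 0‖ ^ 2 := by positivity
    have hge2 : 0 ≤ lam * tau * eta * Real.log (1 + ‖φ Δstar‖ / eta) := by
      apply mul_nonneg hC.le
      apply Real.log_nonneg
      have : 0 ≤ ‖φ Δstar‖ / eta := by positivity
      linarith
    have hfs := hfn Δstar
    have h1 : (1 / (2 * t)) * ‖φ Δstar - φ 0‖ ^ 2 = 0 := by linarith [hfs ▸ hle]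
    have h2 : ‖φ Δstar - φ 0‖ ^ 2 = 0 := by
      have h2t : (1 / (2 * t)) ≠ 0 := by positivity
      exact (mul_eq_zero.mp h1).resolve_left h2t
    have h3 : φ Δstar - φ 0 = 0 := by
      have := pow_eq_zero_iff (n := 2) (by norm_num) |>.mp h2
      exact norm_eq_zero.mp this
    rw [hφ0, sub_zero] at h3
    ext i m
    have := congrArg (fun v => v (i, m)) h3
    simpa [φ] using this
  · set x := φ Δstar with hx
    set y := φ Δ0 with hy
    have hyne : y ≠ 0 := by
      intro h
      apply hΔ0
      ext i m
      have := congrArg (fun v => v (i, m)) h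
      simpa [hy, φ] using this
    have hN : 0 < ‖y‖ := norm_pos_iff.mpr hyne
    set c : ℝ := ‖x‖ / ‖y‖ with hc
    have hc0 : 0 ≤ c := by positivity
    have hcN : c * ‖y‖ = ‖x‖ := div_mul_cancel₀ _ hN.ne'
    have hφc : ∀ a : ℝ, φ (a • Δ0) = a • y := fun a => rfl
    have hnormc : ∀ a : ℝ, 0 ≤ a → ‖φ (a • Δ0)‖ = a * ‖y‖ := by
      intro a ha
      rw [hφc, norm_smul, Real.norm_eq_abs, abs_of_nonneg ha]
    -- compare with c • Δ0
    have hkey := hmin (c • Δ0)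
    rw [hfn, hfn] at hkey
    rw [hnormc c hc0, hcN] at hkey
    have hsub : φ (c • Δ0) - φ Δ0 = (c - 1) • y := by
      rw [hφc]; rw [sub_smul, one_smul]
    rw [hsub] at hkey
    have hnorms : ‖(c - 1) • y‖ ^ 2 = (c - 1) ^ 2 * ‖y‖ ^ 2 := by
      rw [norm_smul, mul_pow, Real.norm_eq_abs, sq_abs]
    have hq : ‖x - y‖ ^ 2 ≤ (c - 1) ^ 2 * ‖y‖ ^ 2 := by
      have h2t : 0 < 1 / (2 * t) := by positivity
      rw [hnorms] at hkey
      nlinarith [hkey]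
    have hexp : ‖x - y‖ ^ 2 = ‖x‖ ^ 2 - 2 * ⟪x, y⟫ + ‖y‖ ^ 2 := by
      rw [@norm_sub_sq_real]
    have hrhs : (c - 1) ^ 2 * ‖y‖ ^ 2 = ‖x‖ ^ 2 - 2 * (‖x‖ * ‖y‖) + ‖y‖ ^ 2 := by
      have : (c - 1) ^ 2 * ‖y‖ ^ 2 = (c * ‖y‖) ^ 2 - 2 * ((c * ‖y‖) * ‖y‖) + ‖y‖ ^ 2 := by
        ring
      rw [this, hcN]
    have hinnerge : ‖x‖ * ‖y‖ ≤ ⟪x, y⟫ := by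
      rw [hexp, hrhs] at hq
      linarith
    have hinnereq : ⟪x, y⟫ = ‖x‖ * ‖y‖ :=
      le_antisymm (real_inner_le_norm x y) hinnerge
    have halign : ‖y‖ • x = ‖x‖ • y := (inner_eq_norm_mul_iff_real).mp hinnereq
    have hxcy : x = c • y := by
      have := congrArg (fun z => (‖y‖)⁻¹ • z) halign
      simpa [smul_smul, inv_mul_cancel₀ hN.ne', hc, div_eq_inv_mul] using this
    have hΔeq : Δstar = c • Δ0 := by
      ext i m
      have := congrArg (fun v => v (i, m)) hxcy
      simpa [hx, hy, φ] using this
    refine ⟨c, ⟨hc0, ?_⟩, hΔeq⟩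
    -- show c ≤ 1
    by_contra hc1
    push_neg at hc1
    have hkey2 := hmin Δ0
    rw [hfn, hfn, hΔeq] at hkey2
    rw [hnormc c hc0, hsub, sub_self, norm_zero] at hkey2
    have hpos : 0 < (1 / (2 * t)) * ‖(c - 1) • y‖ ^ 2 := by
      have h1 : (c - 1) • y ≠ 0 := by
        apply smul_ne_zero _ hyne
        intro h; rw [sub_eq_zero] at h; exact absurd h.symm (ne_of_lt hc1)
      have := norm_pos_iff.mpr h1
      positivity
    have hlog : Real.log (1 + ‖y‖ / eta) ≤ Real.log (1 + c * ‖y‖ / eta) := by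
      apply Real.log_le_log (by positivity)
      gcongr
      nlinarith
    have hmul := mul_le_mul_of_nonneg_left hlog hC.le
    rw [← hy] at hkey2
    have h00 : (1 / (2 * t)) * ((0 : ℝ)) ^ 2 = 0 := by ring
    rw [h00] at hkey2
    linarith [hkey2, hpos, hmul]
end
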